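/- Let π be a solid partition with π_{ijk} = 0 unless i = j = 1 (a 'column' solid partition determined by the weakly decreasing sequence π_{11k}). Then the combinatorial weight satisfies ω^c_π = ∏_{k=1}^{∞} 1/(π_{11k} - π_{11,k+1})!. -/

import Mathlib

/-- A plane partition, 0-indexed: `val i j` corresponds to `ξ_{i+1,j+1}`. -/
structure PlanePartition where
  val : ℕ → ℕ → ℕ
  dec1 : ∀ i j, val (i + 1) j ≤ val i j
  dec2 : ∀ i j, val i (j + 1) ≤ val i j
  finite : (Function.support fun p : ℕ × ℕ => val p.1 p.2).Finite

/-- The size `|ξ|` of a plane partition. -/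
noncomputable def PlanePartition.size (ξ : PlanePartition) : ℕ :=
  ξ.finite.toFinset.sum fun p => ξ.val p.1 p.2

/-- The binary representation of a plane partition: `ξ(i+1,j+1,k+1) = 1` iff
`k+1 ≤ ξ_{i+1,j+1}`. -/
def PlanePartition.bin (ξ : PlanePartition) (i j k : ℕ) : ℕ :=
  if k < ξ.val i j then 1 else 0

/-- A solid partition, 0-indexed: `val i j k` corresponds to `π_{i+1,j+1,k+1}`. -/
structure SolidPartition where
  val : ℕ → ℕ → ℕ → ℕ
  dec1 : ∀ i j k, val (i + 1) j k ≤ val i j k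
  dec2 : ∀ i j k, val i (j + 1) k ≤ val i j k
  dec3 : ∀ i j k, val i j (k + 1) ≤ val i j k
  finite : (Function.support fun p : ℕ × ℕ × ℕ => val p.1 p.2.1 p.2.2).Finite

/-- The size `|π|` of a solid partition. -/
noncomputable def SolidPartition.size (π : SolidPartition) : ℕ :=
  π.finite.toFinset.sum fun p => π.val p.1 p.2.1 p.2.2

/-- A multiplicity sequence in `C_π`: finitely supported non-negative multiplicities,
indexed by (non-empty) plane partitions, whose weighted sum of binary representations
recovers `π`. -/
def IsMultSeq (π : SolidPartition) (m : PlanePartition → ℕ) : Prop :=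
  (Function.support m).Finite ∧ (∀ ξ : PlanePartition, ξ.size = 0 → m ξ = 0) ∧
    ∀ i j k : ℕ, π.val i j k = ∑ᶠ ξ : PlanePartition, m ξ * ξ.bin i j k

/-- The combinatorial weight `ω^c_π = Σ_{{m_ξ}∈C_π} ∏_ξ 1/(m_ξ)!`. -/
noncomputable def SolidPartition.omegaC (π : SolidPartition) : ℚ :=
  ∑ᶠ m ∈ {m : PlanePartition → ℕ | IsMultSeq π m},
    ∏ᶠ ξ : PlanePartition, (1 : ℚ) / ((m ξ).factorial : ℚ)

/- ### Auxiliary material -/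

lemma PlanePartition.ext' {a b : PlanePartition} (h : a.val = b.val) : a = b := by
  cases a; cases b; simpa using h

/-- The column plane partition of height `n`. -/
def colPP (n : ℕ) : PlanePartition where
  val i j := if i = 0 ∧ j = 0 then n else 0
  dec1 i j := by simp
  dec2 i j := by simp
  finite := Set.Finite.subset (Set.finite_singleton ((0 : ℕ), (0 : ℕ))) (by
    intro p hp
    simp only [Function.mem_support] at hp
    by_contra hne
    apply hp
    have : ¬(p.1 = 0 ∧ p.2 = 0) := by
      intro ⟨h1, h2⟩; exact hne (by simp [Prod.ext_iff, h1, h2])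
    simp [this])

@[simp] lemma colPP_val (n i j : ℕ) :
    (colPP n).val i j = if i = 0 ∧ j = 0 then n else 0 := rfl

lemma colPP_inj : Function.Injective colPP := by
  intro a b h
  have := congrArg (fun ξ : PlanePartition => ξ.val 0 0) h
  simpa using this

lemma colPP_bin (n i j k : ℕ) :
    (colPP n).bin i j k = if i = 0 ∧ j = 0 ∧ k < n then 1 else 0 := by
  unfold PlanePartition.bin
  simp only [colPP_val]
  by_cases hij : i = 0 ∧ j = 0
  · obtain ⟨rfl, rfl⟩ := hij; simp
  · simp only [if_neg hij]
    rw [if_neg (by omega), if_neg (fun ⟨a, b, _⟩ => hij ⟨a, b⟩)]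

lemma PlanePartition.size_eq_zero_iff (ξ : PlanePartition) :
    ξ.size = 0 ↔ ∀ i j, ξ.val i j = 0 := by
  unfold PlanePartition.size
  rw [Finset.sum_eq_zero_iff]
  constructor
  · intro h i j
    by_contra hne
    exact hne (h (i, j) (by simp [Function.mem_support, hne]))
  · intro h p _
    exact h p.1 p.2

open Classical in
/-- The canonical multiplicity sequence attached to a solid partition. -/
noncomputable def m0 (π : SolidPartition) (ξ : PlanePartition) : ℕ :=
  if ξ = colPP (ξ.val 0 0) ∧ ξ.val 0 0 ≠ 0 then
    π.val 0 0 (ξ.val 0 0 - 1) - π.val 0 0 (ξ.val 0 0) else 0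

lemma m0_eq_zero (π : SolidPartition) (ξ : PlanePartition)
    (h : ¬(ξ = colPP (ξ.val 0 0) ∧ ξ.val 0 0 ≠ 0)) : m0 π ξ = 0 := by
  unfold m0; rw [if_neg h]

lemma m0_colPP (π : SolidPartition) (k : ℕ) :
    m0 π (colPP (k + 1)) = π.val 0 0 k - π.val 0 0 (k + 1) := by
  unfold m0
  rw [if_pos] <;> simp

/-- Telescoping sum. -/
lemma tele (f : ℕ → ℕ) (hf : ∀ n, f (n + 1) ≤ f n) :
    ∀ k N, k ≤ N → ∑ n ∈ Finset.Ico k N, (f n - f (n + 1)) = f k - f N := by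
  intro k N
  induction N with
  | zero => intro h; interval_cases k; simp
  | succ N ih =>
    intro h
    rcases Nat.lt_or_ge k (N + 1) with h' | h'
    · have hk : k ≤ N := Nat.lt_succ_iff.mp h'
      rw [Finset.sum_Ico_succ_top hk, ih hk]
      have h1 : f N ≤ f k := antitone_nat_of_succ_le hf hk
      have h2 : f (N + 1) ≤ f N := hf N
      omega
    · have : k = N + 1 := le_antisymm h h'
      subst this; simp

theorem stmt_11 (π : SolidPartition)
    (hcol : ∀ i j k : ℕ, ¬(i = 0 ∧ j = 0) → π.val i j k = 0) :
    π.omegaC = ∏ᶠ k : ℕ, (1 : ℚ) / ((π.val 0 0 k - π.val 0 0 (k + 1)).factorial : ℚ) := by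
  classical
  have hganti : Antitone (fun k => π.val 0 0 k) :=
    antitone_nat_of_succ_le fun n => π.dec3 0 0 n
  -- find N with π.val 0 0 N = 0
  obtain ⟨N, hN⟩ : ∃ N, π.val 0 0 N = 0 := by
    by_contra hcon
    push_neg at hcon
    exact (Set.infinite_of_injective_forall_mem
      (f := fun n : ℕ => ((0 : ℕ), (0 : ℕ), n))
      (fun a b hab => by simpa using hab)
      (fun n => by simpa [Function.mem_support] using hcon n)) π.finite
  have hNall : ∀ n, N ≤ n → π.val 0 0 n = 0 := by
    intro n hn
    have := hganti hn
    simp only at this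
    omega
  -- the support finset for m0
  set s : Finset PlanePartition := (Finset.range N).image (fun n => colPP (n + 1)) with hs
  have hm0supp : Function.support (m0 π) ⊆ ↑s := by
    intro ξ hξ
    simp only [Function.mem_support] at hξ
    unfold m0 at hξ
    split_ifs at hξ with hc
    · obtain ⟨hcl, hv⟩ := hc
      obtain ⟨v, hv'⟩ : ∃ v, ξ.val 0 0 = v + 1 := ⟨ξ.val 0 0 - 1, by omega⟩
      rw [hv'] at hcl
      simp only [hs, Finset.coe_image, Set.mem_image, Finset.mem_coe, Finset.mem_range]
      refine ⟨v, ?_, hcl.symm⟩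
      by_contra hvN
      have h1 : π.val 0 0 v = 0 := hNall v (by omega)
      rw [hv'] at hξ
      simp only [Nat.add_sub_cancel] at hξ
      omega
    · exact absurd rfl hξ
  have hm0fin : (Function.support (m0 π)).Finite := Set.Finite.subset s.finite_toSet hm0supp
  have himginj : ∀ x ∈ Finset.range N, ∀ y ∈ Finset.range N,
      colPP (x + 1) = colPP (y + 1) → x = y := by
    intro x _ y _ h; simpa using colPP_inj h
  -- the sum formula for m0
  have hsum : ∀ i j k : ℕ, π.val i j k = ∑ᶠ ξ : PlanePartition, m0 π ξ * ξ.bin i j k := by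
    intro i j k
    have hsub : Function.support (fun ξ => m0 π ξ * ξ.bin i j k) ⊆ ↑s := by
      intro ξ hξ
      simp only [Function.mem_support] at hξ
      exact hm0supp fun h => hξ (by rw [h, zero_mul])
    rw [finsum_eq_sum_of_support_subset _ hsub, Finset.sum_image himginj]
    by_cases hij : i = 0 ∧ j = 0
    · obtain ⟨rfl, rfl⟩ := hij
      have hterm : ∀ n, m0 π (colPP (n + 1)) * (colPP (n + 1)).bin 0 0 k
          = if k ≤ n then π.val 0 0 n - π.val 0 0 (n + 1) else 0 := by
        intro n
        rw [m0_colPP, colPP_bin]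
        by_cases hkn : k ≤ n <;> simp [hkn, Nat.lt_succ_iff]
      simp_rw [hterm]
      rw [← Finset.sum_filter]
      have hfilt : (Finset.range N).filter (fun n => k ≤ n) = Finset.Ico k N := by
        ext n; simp [Finset.mem_Ico, and_comm]
      rw [hfilt]
      rcases le_or_gt k N with hkN | hkN
      · rw [tele (fun n => π.val 0 0 n) (fun n => π.dec3 0 0 n) k N hkN, hN]
        omega
      · rw [Finset.Ico_eq_empty (by omega), Finset.sum_empty]
        exact hNall k (by omega)
    · rw [hcol i j k hij]
      refine (Finset.sum_eq_zero fun n _ => ?_).symm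
      rw [colPP_bin]
      have hno : ¬(i = 0 ∧ j = 0 ∧ k < n + 1) := fun ⟨h1, h2, _⟩ => hij ⟨h1, h2⟩
      rw [if_neg hno, mul_zero]
  -- m0 is a mult seq
  have hm0zero : ∀ ξ : PlanePartition, ξ.size = 0 → m0 π ξ = 0 := by
    intro ξ hξ
    have h0 := (ξ.size_eq_zero_iff).mp hξ 0 0
    exact m0_eq_zero π ξ (fun ⟨_, hv⟩ => hv h0)
  have hm0 : IsMultSeq π (m0 π) := ⟨hm0fin, hm0zero, hsum⟩
  -- uniqueness
  have huniq : ∀ m : PlanePartition → ℕ, IsMultSeq π m → m = m0 π := by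
    intro m ⟨hmfin, hmzero, hmsum⟩
    set sm : Finset PlanePartition := hmfin.toFinset with hsm
    have hmsub : ∀ i j k, Function.support (fun ξ => m ξ * ξ.bin i j k) ⊆ ↑sm := by
      intro i j k ξ hξ
      simp only [Function.mem_support] at hξ
      simp only [hsm, Set.Finite.coe_toFinset, Function.mem_support]
      intro h; exact hξ (by rw [h, zero_mul])
    have hmsum' : ∀ i j k, π.val i j k = ∑ ξ ∈ sm, m ξ * ξ.bin i j k := by
      intro i j k
      rw [hmsum i j k, finsum_eq_sum_of_support_subset _ (hmsub i j k)]
    -- claim A : every ξ in the support of m is a column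
    have hA : ∀ ξ : PlanePartition, m ξ ≠ 0 → ξ = colPP (ξ.val 0 0) ∧ ξ.val 0 0 ≠ 0 := by
      intro ξ hξ
      have hξsm : ξ ∈ sm := by simp [hsm, Function.mem_support, hξ]
      have hzero : ∀ i j, ¬(i = 0 ∧ j = 0) → ξ.val i j = 0 := by
        intro i j hij
        have h0 : ∑ ζ ∈ sm, m ζ * ζ.bin i j 0 = 0 := by
          rw [← hmsum' i j 0]; exact hcol i j 0 hij
        have hterm := (Finset.sum_eq_zero_iff.mp h0) ξ hξsm
        have hb : ξ.bin i j 0 = 0 := by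
          rcases Nat.mul_eq_zero.mp hterm with h | h
          · exact absurd h hξ
          · exact h
        unfold PlanePartition.bin at hb
        by_cases hlt : 0 < ξ.val i j
        · rw [if_pos hlt] at hb; omega
        · omega
      constructor
      · apply PlanePartition.ext'
        funext i j
        by_cases hij : i = 0 ∧ j = 0
        · obtain ⟨rfl, rfl⟩ := hij; simp
        · rw [hzero i j hij]; simp [hij]
      · intro hv
        apply hξ
        apply hmzero
        rw [PlanePartition.size_eq_zero_iff]
        intro i j
        by_cases hij : i = 0 ∧ j = 0
        · obtain ⟨rfl, rfl⟩ := hij; exact hv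
        · exact hzero i j hij
    -- claim B : value of m on columns
    have hB : ∀ k : ℕ, m (colPP (k + 1)) = π.val 0 0 k - π.val 0 0 (k + 1) := by
      intro k
      have key : ∑ ξ ∈ sm, m ξ * ξ.bin 0 0 k
          = (∑ ξ ∈ sm, if ξ = colPP (k + 1) then m ξ else 0)
            + ∑ ξ ∈ sm, m ξ * ξ.bin 0 0 (k + 1) := by
        rw [← Finset.sum_add_distrib]
        refine Finset.sum_congr rfl fun ξ hξ => ?_
        by_cases hm0' : m ξ = 0
        · simp [hm0']
        · obtain ⟨hcl, hv⟩ := hA ξ hm0'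
          obtain ⟨v, hv'⟩ : ∃ v, ξ.val 0 0 = v + 1 := ⟨ξ.val 0 0 - 1, by omega⟩
          rw [hv'] at hcl
          by_cases hvk : v = k
          · subst hvk
            rw [if_pos hcl, hcl, colPP_bin, colPP_bin]
            simp
          · rw [if_neg (by rw [hcl]; exact fun h => hvk (by simpa using colPP_inj h))]
            rw [hcl, colPP_bin, colPP_bin]
            have hiff : (k < v + 1) ↔ (k + 1 < v + 1) := by omega
            by_cases hk : k < v + 1
            · rw [if_pos ⟨rfl, rfl, hk⟩, if_pos ⟨rfl, rfl, hiff.mp hk⟩]; ring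
            · rw [if_neg (by tauto), if_neg (by rw [← hiff] at *; tauto)]; ring
      rw [Finset.sum_ite_eq' sm (colPP (k + 1)) m] at key
      have h1 := hmsum' 0 0 k
      have h2 := hmsum' 0 0 (k + 1)
      by_cases hc : colPP (k + 1) ∈ sm
      · rw [if_pos hc] at key
        omega
      · rw [if_neg hc] at key
        have hz : m (colPP (k + 1)) = 0 := by
          by_contra h
          exact hc (by simp [hsm, Function.mem_support, h])
        omega
    funext ξ
    by_cases hc : ξ = colPP (ξ.val 0 0) ∧ ξ.val 0 0 ≠ 0
    · obtain ⟨hcl, hv⟩ := hc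
      obtain ⟨v, hv'⟩ : ∃ v, ξ.val 0 0 = v + 1 := ⟨ξ.val 0 0 - 1, by omega⟩
      rw [hv'] at hcl
      rw [hcl, hB v, m0_colPP]
    · rw [m0_eq_zero π ξ hc]
      by_contra h
      exact hc (hA ξ h)
  -- the set of mult seqs is the singleton {m0 π}
  have hset : {m : PlanePartition → ℕ | IsMultSeq π m} = {m0 π} := by
    ext m
    simp only [Set.mem_setOf_eq, Set.mem_singleton_iff]
    exact ⟨huniq m, fun h => h ▸ hm0⟩
  unfold SolidPartition.omegaC
  rw [hset, finsum_mem_singleton]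
  -- compute the product
  have hLsub : Function.mulSupport (fun ξ => (1 : ℚ) / ((m0 π ξ).factorial : ℚ)) ⊆ ↑s := by
    intro ξ hξ
    apply hm0supp
    simp only [Function.mem_support]
    intro h
    apply hξ
    simp [Function.mem_mulSupport, h]
  rw [finprod_eq_prod_of_mulSupport_subset _ hLsub, Finset.prod_image himginj]
  have hRsub : Function.mulSupport
      (fun k => (1 : ℚ) / ((π.val 0 0 k - π.val 0 0 (k + 1)).factorial : ℚ))
      ⊆ ↑(Finset.range N) := by
    intro k hk
    simp only [Function.mem_mulSupport] at hk
    simp only [Finset.coe_range, Set.mem_Iio]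
    by_contra hkN
    have h1 : π.val 0 0 k = 0 := hNall k (by omega)
    have h2 : π.val 0 0 (k + 1) = 0 := hNall (k + 1) (by omega)
    apply hk
    rw [show π.val 0 0 k - π.val 0 0 (k + 1) = 0 by omega]
    norm_num
  rw [finprod_eq_prod_of_mulSupport_subset _ hRsub]
  refine Finset.prod_congr rfl fun n _ => ?_
  rw [m0_colPP]
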